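/- If T is a linear isometry of (V, d_{w,(P,π)}) then for every i ∈ [s] and every nonzero v_i ∈ V_i, the ideal generated by supp_π(T(v_i)) is a principal ideal of P. -/

import Mathlib

attribute [local instance] Classical.propDecidable

noncomputable section

variable {ι F : Type*}

section Defs
variable [Fintype ι] [PartialOrder ι] [Field F] [Fintype F] {k : ι → ℕ}

/-- block support -/
def suppB (u : ∀ i, Fin (k i) → F) : Finset ι :=
  Finset.univ.filter fun i => u i ≠ 0

/-- order ideal generated by the block support -/
def idealOf (u : ∀ i, Fin (k i) → F) : Finset ι :=
  Finset.univ.filter fun i => ∃ j ∈ suppB u, i ≤ j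

/-- maximal elements of the ideal generated by the support -/
def maxOf (u : ∀ i, Fin (k i) → F) : Finset ι :=
  (idealOf u).filter fun i => ∀ j ∈ idealOf u, i ≤ j → i = j

/-- maximal weight of a block -/
def Wblk (w : F → ℕ) (u : ∀ i, Fin (k i) → F) (i : ι) : ℕ :=
  Finset.univ.sup fun j => w (u i j)

/-- maximal value of the weight -/
def Mw (w : F → ℕ) : ℕ := Finset.univ.sup w

/-- minimal value of the weight on nonzero elements -/
def mw (w : F → ℕ) : ℕ := sInf (w '' {a | a ≠ 0})

/-- the weighted poset block weight -/
def omegaW (w : F → ℕ) (u : ∀ i, Fin (k i) → F) : ℕ :=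
  (∑ i ∈ maxOf u, Wblk w u i) + (idealOf u \ maxOf u).card * Mw w

/-- principal ideal generated by `i` -/
def pIdeal (i : ι) : Finset ι := Finset.univ.filter fun j => j ≤ i

end Defs

section Lemmas
variable [Fintype ι] [PartialOrder ι] [Field F] [Fintype F] {k : ι → ℕ}

lemma mem_suppB {u : ∀ i, Fin (k i) → F} {a : ι} : a ∈ suppB u ↔ u a ≠ 0 := by
  simp [suppB]

lemma mem_idealOf {u : ∀ i, Fin (k i) → F} {a : ι} :
    a ∈ idealOf u ↔ ∃ j ∈ suppB u, a ≤ j := by simp [idealOf]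

lemma mem_pIdeal {a b : ι} : b ∈ pIdeal a ↔ b ≤ a := by simp [pIdeal]

lemma mem_maxOf {u : ∀ i, Fin (k i) → F} {a : ι} :
    a ∈ maxOf u ↔ a ∈ idealOf u ∧ ∀ j ∈ idealOf u, a ≤ j → a = j := by
  simp [maxOf]

lemma suppB_subset_idealOf (u : ∀ i, Fin (k i) → F) : suppB u ⊆ idealOf u :=
  fun a ha => mem_idealOf.2 ⟨a, ha, le_rfl⟩

lemma idealOf_lower {u : ∀ i, Fin (k i) → F} {a b : ι}
    (hb : b ∈ idealOf u) (hab : a ≤ b) : a ∈ idealOf u := by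
  obtain ⟨j, hj, hbj⟩ := mem_idealOf.1 hb
  exact mem_idealOf.2 ⟨j, hj, hab.trans hbj⟩

lemma maxOf_subset_suppB {u : ∀ i, Fin (k i) → F} : maxOf u ⊆ suppB u := by
  intro a ha
  obtain ⟨ha1, ha2⟩ := mem_maxOf.1 ha
  obtain ⟨j, hj, haj⟩ := mem_idealOf.1 ha1
  exact (ha2 j (suppB_subset_idealOf u hj) haj) ▸ hj

lemma exists_le_maxOf {u : ∀ i, Fin (k i) → F} {a : ι} (ha : a ∈ idealOf u) :
    ∃ b ∈ maxOf u, a ≤ b := by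
  obtain ⟨m, hm, hmax⟩ : ∃ m ∈ (idealOf u).filter (fun b => a ≤ b),
      ∀ x ∈ (idealOf u).filter (fun b => a ≤ b), ¬ m < x := by
    obtain ⟨m, hm⟩ := Finset.exists_maximal (s := (idealOf u).filter fun b => a ≤ b)
      ⟨a, Finset.mem_filter.2 ⟨ha, le_rfl⟩⟩
    exact ⟨m, hm.1, fun x hx hlt => hlt.not_ge (hm.2 hx hlt.le)⟩
  rw [Finset.mem_filter] at hm
  refine ⟨m, mem_maxOf.2 ⟨hm.1, ?_⟩, hm.2⟩
  intro j hj hmj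
  by_contra hne
  exact hmax j (Finset.mem_filter.2 ⟨hj, hm.2.trans hmj⟩) (lt_of_le_of_ne hmj hne)

lemma one_le_mw (w : F → ℕ) (hw0 : ∀ a : F, w a = 0 ↔ a = 0) : 1 ≤ mw w := by
  have hne : (w '' {a | a ≠ 0}).Nonempty := ⟨w 1, 1, one_ne_zero, rfl⟩
  obtain ⟨a, ha, hmw⟩ := Nat.sInf_mem hne
  rw [Nat.one_le_iff_ne_zero]
  unfold mw
  rw [← hmw]
  exact fun h => ha ((hw0 a).1 h)

lemma mw_le (w : F → ℕ) {a : F} (ha : a ≠ 0) : mw w ≤ w a := Nat.sInf_le ⟨a, ha, rfl⟩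

lemma le_Mw (w : F → ℕ) (a : F) : w a ≤ Mw w := Finset.le_sup (Finset.mem_univ a)

lemma one_le_Mw (w : F → ℕ) (hw0 : ∀ a : F, w a = 0 ↔ a = 0) : 1 ≤ Mw w := by
  refine le_trans ?_ (le_Mw w 1)
  rw [Nat.one_le_iff_ne_zero]
  exact fun h => one_ne_zero ((hw0 1).1 h)

lemma exists_Mw (w : F → ℕ) (hw0 : ∀ a : F, w a = 0 ↔ a = 0) :
    ∃ a : F, a ≠ 0 ∧ w a = Mw w := by
  obtain ⟨a, -, ha⟩ := Finset.exists_mem_eq_sup Finset.univ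
    ⟨0, Finset.mem_univ (0 : F)⟩ w
  refine ⟨a, ?_, ha.symm⟩
  rintro rfl
  have h1 := one_le_Mw w hw0
  unfold Mw at h1
  rw [ha, (hw0 0).2 rfl] at h1
  omega

lemma Wblk_le_Mw {w : F → ℕ} {x : ∀ i, Fin (k i) → F} {b : ι} : Wblk w x b ≤ Mw w :=
  Finset.sup_le fun t _ => le_Mw w _

lemma mw_le_Wblk {w : F → ℕ} {x : ∀ i, Fin (k i) → F} {b : ι} (h : x b ≠ 0) :
    mw w ≤ Wblk w x b := by
  obtain ⟨t, ht⟩ := Function.ne_iff.1 h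
  have ht' : x b t ≠ 0 := by simpa using ht
  unfold Wblk
  exact le_trans (mw_le w ht') (Finset.le_sup (f := fun j => w (x b j)) (Finset.mem_univ t))

lemma suppB_zero : suppB (0 : ∀ i, Fin (k i) → F) = ∅ := by simp [suppB]

lemma omegaW_zero (w : F → ℕ) : omegaW w (0 : ∀ i, Fin (k i) → F) = 0 := by
  have h1 : idealOf (0 : ∀ i, Fin (k i) → F) = ∅ := by
    simp [idealOf, suppB_zero]
  have h2 : maxOf (0 : ∀ i, Fin (k i) → F) = ∅ := by
    unfold maxOf; rw [h1]; rfl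
  unfold omegaW
  rw [h1, h2]
  simp

lemma omegaW_pos (w : F → ℕ) (hw0 : ∀ a : F, w a = 0 ↔ a = 0)
    {u : ∀ i, Fin (k i) → F} (hu : u ≠ 0) : 0 < omegaW w u := by
  obtain ⟨b0, hb0⟩ := Function.ne_iff.1 hu
  have hb0' : b0 ∈ suppB u := mem_suppB.2 (by simpa using hb0)
  obtain ⟨b, hb, -⟩ := exists_le_maxOf (suppB_subset_idealOf u hb0')
  have h1 : mw w ≤ Wblk w u b := mw_le_Wblk (mem_suppB.1 (maxOf_subset_suppB hb))
  have h2 : Wblk w u b ≤ ∑ c ∈ maxOf u, Wblk w u c :=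
    Finset.single_le_sum (fun c _ => Nat.zero_le _) hb
  have h3 := one_le_mw w hw0
  unfold omegaW
  omega

lemma idealOf_eq_pIdeal {y : ∀ i, Fin (k i) → F} {a : ι}
    (h1 : suppB y ⊆ pIdeal a) (h2 : a ∈ suppB y) : idealOf y = pIdeal a := by
  ext z
  rw [mem_idealOf, mem_pIdeal]
  constructor
  · rintro ⟨j, hj, hzj⟩; exact hzj.trans (mem_pIdeal.1 (h1 hj))
  · intro hza; exact ⟨a, h2, hza⟩

lemma maxOf_of_principal {x : ∀ i, Fin (k i) → F} {θ : ι}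
    (h : idealOf x = pIdeal θ) : maxOf x = {θ} := by
  ext b
  rw [mem_maxOf, h, Finset.mem_singleton]
  constructor
  · rintro ⟨hb, hmax⟩
    exact hmax θ (mem_pIdeal.2 le_rfl) (mem_pIdeal.1 hb)
  · rintro rfl
    exact ⟨mem_pIdeal.2 le_rfl, fun j hj hbj => le_antisymm hbj (mem_pIdeal.1 hj)⟩

lemma omegaW_principal (w : F → ℕ) {x : ∀ i, Fin (k i) → F} {θ : ι}
    (h : idealOf x = pIdeal θ) :
    omegaW w x = Wblk w x θ + ((pIdeal θ).erase θ).card * Mw w := by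
  have hm := maxOf_of_principal h
  unfold omegaW
  rw [hm, h, Finset.sum_singleton, ← Finset.erase_eq]

lemma suppB_of_single {v : ∀ i, Fin (k i) → F} {a : ι}
    (hv : suppB v ⊆ {a}) (h0 : v ≠ 0) : suppB v = {a} := by
  obtain ⟨b, hb⟩ := Function.ne_iff.1 h0
  have hbs : b ∈ suppB v := mem_suppB.2 (by simpa using hb)
  have hba : b = a := Finset.mem_singleton.1 (hv hbs)
  subst hba
  exact Finset.Subset.antisymm hv (Finset.singleton_subset_iff.2 hbs)

lemma suppB_smul {u : ∀ i, Fin (k i) → F} {c : F} (hc : c ≠ 0) :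
    suppB (c • u) = suppB u := by
  ext b
  rw [mem_suppB, mem_suppB, Pi.smul_apply]
  rw [smul_ne_zero_iff]
  simp [hc]

lemma idealOf_congr {x y : ∀ i, Fin (k i) → F} (h : suppB x = suppB y) :
    idealOf x = idealOf y := by
  unfold idealOf; rw [h]

lemma maxOf_congr {x y : ∀ i, Fin (k i) → F} (h : suppB x = suppB y) :
    maxOf x = maxOf y := by
  unfold maxOf; rw [idealOf_congr h]

lemma card_pIdeal_eq (a : ι) : (pIdeal a).card = ((pIdeal a).erase a).card + 1 := by
  rw [Finset.card_erase_of_mem (mem_pIdeal.2 le_rfl)]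
  have : 0 < (pIdeal a).card := Finset.card_pos.2 ⟨a, mem_pIdeal.2 le_rfl⟩
  omega

theorem aux (w : F → ℕ) (hw0 : ∀ a : F, w a = 0 ↔ a = 0) :
    ∀ n : ℕ, ∀ (T : (∀ i, Fin (k i) → F) →ₗ[F] (∀ i, Fin (k i) → F)),
      (∀ u : ∀ i, Fin (k i) → F, omegaW w (T u) = omegaW w u) →
      ∀ a : ι, (pIdeal a).card ≤ n →
      ∀ v : ∀ i, Fin (k i) → F, suppB v ⊆ {a} → v ≠ 0 →
      ∃ j : ι, idealOf (T v) = pIdeal j := by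
  intro n
  induction n with
  | zero =>
      intro T hT a ha v _ _
      have hpos : 0 < (pIdeal a).card := Finset.card_pos.2 ⟨a, mem_pIdeal.2 le_rfl⟩
      omega
  | succ n ih =>
      intro T hT a hcard v hv h0
      -- basic facts about v
      have hvs : suppB v = {a} := suppB_of_single hv h0
      have hva : v a ≠ 0 := mem_suppB.1 (hvs ▸ Finset.mem_singleton_self a)
      have hIv : idealOf v = pIdeal a :=
        idealOf_eq_pIdeal
          (by rw [hvs]; exact Finset.singleton_subset_iff.2 (mem_pIdeal.2 le_rfl))
          (hvs ▸ Finset.mem_singleton_self a)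
      -- injectivity and the inverse isometry
      have hinj : Function.Injective T := by
        intro x y hxy
        by_contra hne
        have hsub : x - y ≠ 0 := sub_ne_zero.2 hne
        have h1 : T (x - y) = 0 := by rw [map_sub, hxy, sub_self]
        have h2 := hT (x - y)
        rw [h1, omegaW_zero] at h2
        exact (omegaW_pos w hw0 hsub).ne' h2.symm
      have hbij : Function.Bijective T := Finite.injective_iff_bijective.1 hinj
      obtain ⟨Sinv, hTS, hST⟩ : ∃ S : (∀ i, Fin (k i) → F) →ₗ[F] (∀ i, Fin (k i) → F),
          (∀ y, T (S y) = y) ∧ (∀ x, S (T x) = x) := by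
        refine ⟨(LinearEquiv.ofBijective T hbij).symm.toLinearMap, ?_, ?_⟩
        · intro y
          simpa using (LinearEquiv.ofBijective T hbij).apply_symm_apply y
        · intro x
          simpa using (LinearEquiv.ofBijective T hbij).symm_apply_apply x
      have hS : ∀ y, omegaW w (Sinv y) = omegaW w y := by
        intro y
        have h := hT (Sinv y)
        rw [hTS y] at h
        exact h.symm
      -- T v is nonzero, pick a maximal element of its ideal
      have hu0 : T v ≠ 0 := by
        intro h
        have h2 := hT v
        rw [h, omegaW_zero] at h2
        exact (omegaW_pos w hw0 h0).ne' h2.symm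
      obtain ⟨b0, hb0⟩ := Function.ne_iff.1 hu0
      obtain ⟨j1, hj1, -⟩ :=
        exists_le_maxOf (suppB_subset_idealOf (T v) (mem_suppB.2 (by simpa using hb0)))
      by_cases hsingle : ∀ b ∈ maxOf (T v), b = j1
      · -- the ideal is principal, generated by j1
        refine ⟨j1, ?_⟩
        ext z
        rw [mem_pIdeal]
        constructor
        · intro hz
          obtain ⟨b, hb, hzb⟩ := exists_le_maxOf hz
          exact (hsingle b hb) ▸ hzb
        · intro hz
          exact idealOf_lower (mem_maxOf.1 hj1).1 hz
      · push_neg at hsingle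
        obtain ⟨j2, hj2, hj2ne⟩ := hsingle
        exfalso
        have hj1s : (T v) j1 ≠ 0 := mem_suppB.1 (maxOf_subset_suppB hj1)
        have hj1I : j1 ∈ idealOf (T v) := (mem_maxOf.1 hj1).1
        have hj1max : ∀ z ∈ idealOf (T v), j1 ≤ z → j1 = z := (mem_maxOf.1 hj1).2
        -- STEP (3): scaling argument, get card bound d + 1 ≤ ci'
        obtain ⟨astar, hastar0, hastar⟩ := exists_Mw w hw0
        obtain ⟨t0, ht0⟩ := Function.ne_iff.1 hj1s
        have ht0' : (T v) j1 t0 ≠ 0 := by simpa using ht0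
        have hlam0 : astar * ((T v) j1 t0)⁻¹ ≠ 0 :=
          mul_ne_zero hastar0 (inv_ne_zero ht0')
        set lam : F := astar * ((T v) j1 t0)⁻¹ with hlamdef
        have hsmulsupp : suppB (lam • T v) = suppB (T v) := suppB_smul hlam0
        have hWj1 : Wblk w (lam • T v) j1 = Mw w := by
          refine le_antisymm Wblk_le_Mw ?_
          have hcoord : (lam • T v) j1 t0 = astar := by
            rw [Pi.smul_apply, Pi.smul_apply, smul_eq_mul, hlamdef,
              mul_assoc, inv_mul_cancel₀ ht0', mul_one]
          calc Mw w = w ((lam • T v) j1 t0) := by rw [hcoord, hastar]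
          _ ≤ Wblk w (lam • T v) j1 := by
                unfold Wblk
                exact Finset.le_sup (f := fun j => w ((lam • T v) j1 j)) (Finset.mem_univ t0)
        have hWj2 : mw w ≤ Wblk w (lam • T v) j2 := by
          apply mw_le_Wblk
          have hmem : j2 ∈ suppB (lam • T v) := by
            rw [hsmulsupp]; exact maxOf_subset_suppB hj2
          exact mem_suppB.1 hmem
        have hIsm : idealOf (lam • T v) = idealOf (T v) := idealOf_congr hsmulsupp
        have hMsm : maxOf (lam • T v) = maxOf (T v) := maxOf_congr hsmulsupp
        have hsum2 : Wblk w (lam • T v) j1 + Wblk w (lam • T v) j2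
            ≤ ∑ b ∈ maxOf (T v), Wblk w (lam • T v) b := by
          rw [← Finset.sum_pair (Ne.symm hj2ne)]
          apply Finset.sum_le_sum_of_subset
          intro z hz
          rcases Finset.mem_insert.1 hz with rfl | hz
          · exact hj1
          · rw [Finset.mem_singleton] at hz
            exact hz ▸ hj2
        have hlow : Mw w + mw w + (idealOf (T v) \ maxOf (T v)).card * Mw w
            ≤ omegaW w (lam • T v) := by
          unfold omegaW
          rw [hMsm, hIsm]
          rw [hWj1] at hsum2
          omega
        have hsm_v : suppB (lam • v) = {a} := by rw [suppB_smul hlam0, hvs]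
        have hIlam : idealOf (lam • v) = pIdeal a :=
          idealOf_eq_pIdeal
            (by rw [hsm_v]; exact Finset.singleton_subset_iff.2 (mem_pIdeal.2 le_rfl))
            (hsm_v ▸ Finset.mem_singleton_self a)
        have hup : omegaW w (lam • v) ≤ Mw w + ((pIdeal a).erase a).card * Mw w := by
          rw [omegaW_principal w hIlam]
          have hW := Wblk_le_Mw (w := w) (x := lam • v) (b := a)
          omega
        have hTsm : omegaW w (lam • T v) = omegaW w (lam • v) := by
          rw [← map_smul T, hT]
        have hd1 : (idealOf (T v) \ maxOf (T v)).card + 1 ≤ ((pIdeal a).erase a).card := by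
          have h1 : Mw w + mw w + (idealOf (T v) \ maxOf (T v)).card * Mw w
              ≤ Mw w + ((pIdeal a).erase a).card * Mw w := by
            calc Mw w + mw w + (idealOf (T v) \ maxOf (T v)).card * Mw w
                ≤ omegaW w (lam • T v) := hlow
            _ = omegaW w (lam • v) := hTsm
            _ ≤ Mw w + ((pIdeal a).erase a).card * Mw w := hup
          have hmw := one_le_mw w hw0
          by_contra hcon
          push_neg at hcon
          have hle : ((pIdeal a).erase a).card ≤ (idealOf (T v) \ maxOf (T v)).card := by
            omega
          have := Nat.mul_le_mul_right (Mw w) hle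
          omega
        -- STEP (4): the principal ideal of j1 is small
        have hsubJ : (pIdeal j1).erase j1 ⊆ idealOf (T v) \ maxOf (T v) := by
          intro z hz
          rw [Finset.mem_erase, mem_pIdeal] at hz
          obtain ⟨hzne, hzle⟩ := hz
          rw [Finset.mem_sdiff]
          refine ⟨idealOf_lower hj1I hzle, ?_⟩
          intro hzM
          exact hzne ((mem_maxOf.1 hzM).2 j1 hj1I hzle)
        have hcj1 : ((pIdeal j1).erase j1).card ≤ (idealOf (T v) \ maxOf (T v)).card :=
          Finset.card_le_card hsubJ
        have hcard_j1 : (pIdeal j1).card ≤ n := by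
          have h1 := card_pIdeal_eq j1
          have h2 := card_pIdeal_eq a
          omega
        -- STEP (5): apply the induction hypothesis to the inverse isometry
        set u1 : ∀ i, Fin (k i) → F := fun b => if b = j1 then T v b else 0 with hu1def
        have hu1j1 : u1 j1 = T v j1 := by simp [hu1def]
        have hu1ne : ∀ b, b ≠ j1 → u1 b = 0 := fun b hb => by simp [hu1def, hb]
        have hu1supp : suppB u1 = {j1} := by
          ext b
          rw [mem_suppB, Finset.mem_singleton]
          constructor
          · intro hb
            by_contra hne
            exact hb (hu1ne b hne)
          · rintro rfl
            rw [hu1j1]; exact hj1s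
        have hu10 : u1 ≠ 0 := by
          intro h
          apply hj1s
          rw [← hu1j1, h]
          simp
        have hIu1 : idealOf u1 = pIdeal j1 :=
          idealOf_eq_pIdeal
            (by rw [hu1supp]; exact Finset.singleton_subset_iff.2 (mem_pIdeal.2 le_rfl))
            (hu1supp ▸ Finset.mem_singleton_self j1)
        obtain ⟨θ, hθ⟩ := ih Sinv hS j1 hcard_j1 u1
          (by rw [hu1supp]) hu10
        set x1 : ∀ i, Fin (k i) → F := Sinv u1 with hx1def
        have hTx1 : T x1 = u1 := hTS u1
        have hθmax : θ ∈ maxOf x1 := by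
          rw [maxOf_of_principal hθ]; exact Finset.mem_singleton_self θ
        have hθsupp : θ ∈ suppB x1 := maxOf_subset_suppB hθmax
        have hx1supp : suppB x1 ⊆ pIdeal θ := fun b hb => hθ ▸ suppB_subset_idealOf x1 hb
        have hx1θ : x1 θ ≠ 0 := mem_suppB.1 hθsupp
        -- STEP (6): θ has small principal ideal, hence θ ≠ a and ¬ a ≤ θ
        have hωx1 : omegaW w x1 = omegaW w u1 := hS u1
        have hθcard : ((pIdeal θ).erase θ).card ≤ ((pIdeal j1).erase j1).card := by
          have h1 : omegaW w x1 = Wblk w x1 θ + ((pIdeal θ).erase θ).card * Mw w :=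
            omegaW_principal w hθ
          have h2 : omegaW w u1 = Wblk w u1 j1 + ((pIdeal j1).erase j1).card * Mw w :=
            omegaW_principal w hIu1
          have h3 : mw w ≤ Wblk w x1 θ := mw_le_Wblk hx1θ
          have h4 : Wblk w u1 j1 ≤ Mw w := Wblk_le_Mw
          have h5 := one_le_mw w hw0
          by_contra hcon
          push_neg at hcon
          have hle : ((pIdeal j1).erase j1).card + 1 ≤ ((pIdeal θ).erase θ).card := hcon
          have := Nat.mul_le_mul_right (Mw w) hle
          rw [Nat.add_mul, one_mul] at this
          omega
        have hθa_card : (pIdeal θ).card < (pIdeal a).card := by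
          have h1 := card_pIdeal_eq θ
          have h2 := card_pIdeal_eq a
          omega
        have hnia : ¬ a ≤ θ := by
          intro h
          have hsub : pIdeal a ⊆ pIdeal θ :=
            fun z hz => mem_pIdeal.2 ((mem_pIdeal.1 hz).trans h)
          have := Finset.card_le_card hsub
          omega
        have hθne_a : θ ≠ a := by
          rintro rfl
          omega
        -- STEP (D): the image-side inequality for the truncated vector
        have hr2 : T (v - x1) = T v - u1 := by rw [map_sub, hTx1]
        have hr2b : ∀ b, b ≠ j1 → (T v - u1) b = T v b := by
          intro b hb
          rw [Pi.sub_apply, hu1ne b hb, sub_zero]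
        have hr2j1 : (T v - u1) j1 = 0 := by
          rw [Pi.sub_apply, hu1j1, sub_self]
        have hr2supp : suppB (T v - u1) = (suppB (T v)).erase j1 := by
          ext b
          rw [mem_suppB, Finset.mem_erase, mem_suppB]
          constructor
          · intro hb
            have hbne : b ≠ j1 := by rintro rfl; exact hb hr2j1
            exact ⟨hbne, by rw [← hr2b b hbne]; exact hb⟩
          · rintro ⟨hbne, hb⟩
            rw [hr2b b hbne]; exact hb
        have hI2sub : idealOf (T v - u1) ⊆ idealOf (T v) := by
          intro z hz
          obtain ⟨j, hj, hzj⟩ := mem_idealOf.1 hz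
          rw [hr2supp, Finset.mem_erase] at hj
          exact mem_idealOf.2 ⟨j, hj.2, hzj⟩
        have hj1nI2 : j1 ∉ idealOf (T v - u1) := by
          intro h
          obtain ⟨j, hj, hzj⟩ := mem_idealOf.1 h
          rw [hr2supp, Finset.mem_erase] at hj
          exact hj.1 (hj1max j (suppB_subset_idealOf _ hj.2) hzj).symm
        have hMsub : (maxOf (T v)).erase j1 ⊆ maxOf (T v - u1) := by
          intro b hb
          rw [Finset.mem_erase] at hb
          obtain ⟨hbne, hbM⟩ := hb
          have hbsupp : b ∈ suppB (T v) := maxOf_subset_suppB hbM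
          have hbI2 : b ∈ idealOf (T v - u1) := suppB_subset_idealOf _
            (by rw [hr2supp, Finset.mem_erase]; exact ⟨hbne, hbsupp⟩)
          rw [mem_maxOf]
          exact ⟨hbI2, fun z hz hbz => (mem_maxOf.1 hbM).2 z (hI2sub hz) hbz⟩
        have hWr2 : ∀ b, b ≠ j1 → Wblk w (T v - u1) b = Wblk w (T v) b := by
          intro b hb
          unfold Wblk
          rw [hr2b b hb]
        have hkey : omegaW w (T v - u1) + Wblk w (T v) j1 ≤ omegaW w (T v) := by
          have hsplit : ∑ b ∈ maxOf (T v - u1), Wblk w (T v - u1) b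
              = (∑ b ∈ maxOf (T v - u1) \ ((maxOf (T v)).erase j1), Wblk w (T v - u1) b)
                + ∑ b ∈ (maxOf (T v)).erase j1, Wblk w (T v - u1) b :=
            (Finset.sum_sdiff hMsub).symm
          have hEq : ∑ b ∈ (maxOf (T v)).erase j1, Wblk w (T v - u1) b
              = ∑ b ∈ (maxOf (T v)).erase j1, Wblk w (T v) b := by
            refine Finset.sum_congr rfl fun b hb => ?_
            exact hWr2 b (Finset.mem_erase.1 hb).1
          have hEbound : ∑ b ∈ maxOf (T v - u1) \ ((maxOf (T v)).erase j1), Wblk w (T v - u1) b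
              ≤ (maxOf (T v - u1) \ ((maxOf (T v)).erase j1)).card * Mw w := by
            calc ∑ b ∈ maxOf (T v - u1) \ ((maxOf (T v)).erase j1), Wblk w (T v - u1) b
                ≤ ∑ _b ∈ maxOf (T v - u1) \ ((maxOf (T v)).erase j1), Mw w :=
                  Finset.sum_le_sum fun b _ => Wblk_le_Mw
            _ = (maxOf (T v - u1) \ ((maxOf (T v)).erase j1)).card * Mw w := by
                  rw [Finset.sum_const, smul_eq_mul]
          have hdisj : Disjoint (maxOf (T v - u1) \ ((maxOf (T v)).erase j1))
              (idealOf (T v - u1) \ maxOf (T v - u1)) := by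
            rw [Finset.disjoint_left]
            intro z hz1 hz2
            exact (Finset.mem_sdiff.1 hz2).2 (Finset.mem_sdiff.1 hz1).1
          have hsub1 : maxOf (T v - u1) \ ((maxOf (T v)).erase j1)
              ⊆ idealOf (T v) \ maxOf (T v) := by
            intro z hz
            rw [Finset.mem_sdiff] at hz ⊢
            obtain ⟨hz1, hz2⟩ := hz
            have hzI2 : z ∈ idealOf (T v - u1) := (mem_maxOf.1 hz1).1
            refine ⟨hI2sub hzI2, ?_⟩
            intro hzM
            have hzne : z ≠ j1 := by rintro rfl; exact hj1nI2 hzI2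
            exact hz2 (Finset.mem_erase.2 ⟨hzne, hzM⟩)
          have hsub2 : idealOf (T v - u1) \ maxOf (T v - u1)
              ⊆ idealOf (T v) \ maxOf (T v) := by
            intro z hz
            rw [Finset.mem_sdiff] at hz ⊢
            obtain ⟨hz1, hz2⟩ := hz
            refine ⟨hI2sub hz1, ?_⟩
            intro hzM
            have hzne : z ≠ j1 := by rintro rfl; exact hj1nI2 hz1
            exact hz2 (hMsub (Finset.mem_erase.2 ⟨hzne, hzM⟩))
          have hcards : (maxOf (T v - u1) \ ((maxOf (T v)).erase j1)).card
              + (idealOf (T v - u1) \ maxOf (T v - u1)).card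
              ≤ (idealOf (T v) \ maxOf (T v)).card := by
            rw [← Finset.card_union_of_disjoint hdisj]
            exact Finset.card_le_card (Finset.union_subset hsub1 hsub2)
          have hRHS : omegaW w (T v)
              = Wblk w (T v) j1 + ∑ b ∈ (maxOf (T v)).erase j1, Wblk w (T v) b
                + (idealOf (T v) \ maxOf (T v)).card * Mw w := by
            unfold omegaW
            rw [← Finset.add_sum_erase _ _ hj1]
          have h1 : omegaW w (T v - u1)
              = (∑ b ∈ maxOf (T v - u1) \ ((maxOf (T v)).erase j1), Wblk w (T v - u1) b)
                + (∑ b ∈ (maxOf (T v)).erase j1, Wblk w (T v) b)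
                + (idealOf (T v - u1) \ maxOf (T v - u1)).card * Mw w := by
            unfold omegaW
            rw [hsplit, hEq]
          have hmul : (maxOf (T v - u1) \ ((maxOf (T v)).erase j1)).card * Mw w
              + (idealOf (T v - u1) \ maxOf (T v - u1)).card * Mw w
              ≤ (idealOf (T v) \ maxOf (T v)).card * Mw w := by
            have := Nat.mul_le_mul_right (Mw w) hcards
            rw [Nat.add_mul] at this
            exact this
          omega
        -- STEP (E): source-side computation and contradiction
        have hx1a : x1 a = 0 := by
          by_contra hne
          exact hnia (mem_pIdeal.1 (hx1supp (mem_suppB.2 hne)))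
        have hya : (v - x1) a = v a := by rw [Pi.sub_apply, hx1a, sub_zero]
        have hya0 : (v - x1) a ≠ 0 := by rw [hya]; exact hva
        have hvb0 : ∀ b, b ≠ a → v b = 0 := by
          intro b hb
          by_contra hne
          exact hb (Finset.mem_singleton.1 (hv (mem_suppB.2 hne)))
        have h2ω : omegaW w (T v) = omegaW w v := hT v
        have h3mw : mw w ≤ Wblk w (T v) j1 := mw_le_Wblk hj1s
        have h4mw := one_le_mw w hw0
        by_cases hθi : θ ≤ a
        · -- case (a): θ strictly below a
          have hsuppy : suppB (v - x1) ⊆ pIdeal a := by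
            intro b hb
            rw [mem_suppB, Pi.sub_apply] at hb
            by_cases hba : b = a
            · subst hba; exact mem_pIdeal.2 le_rfl
            · rw [hvb0 b hba, zero_sub] at hb
              have hx1b : x1 b ≠ 0 := fun h => hb (by rw [h, neg_zero])
              exact mem_pIdeal.2 ((mem_pIdeal.1 (hx1supp (mem_suppB.2 hx1b))).trans hθi)
          have hIy : idealOf (v - x1) = pIdeal a :=
            idealOf_eq_pIdeal hsuppy (mem_suppB.2 hya0)
          have hωy : omegaW w (v - x1) = omegaW w v := by
            rw [omegaW_principal w hIy, omegaW_principal w hIv]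
            congr 1
            unfold Wblk
            rw [hya]
          have h1 := hT (v - x1)
          rw [hr2, hωy] at h1
          omega
        · -- case (b): θ incomparable with a
          have hyθ : (v - x1) θ ≠ 0 := by
            rw [Pi.sub_apply, hvb0 θ hθne_a, zero_sub]
            exact fun h => hx1θ (by rwa [neg_eq_zero] at h)
          have hsuppy : suppB (v - x1) ⊆ pIdeal a ∪ pIdeal θ := by
            intro b hb
            rw [mem_suppB, Pi.sub_apply] at hb
            by_cases hba : b = a
            · subst hba; exact Finset.mem_union_left _ (mem_pIdeal.2 le_rfl)
            · rw [hvb0 b hba, zero_sub] at hb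
              have hx1b : x1 b ≠ 0 := fun h => hb (by rw [h, neg_zero])
              exact Finset.mem_union_right _ (hx1supp (mem_suppB.2 hx1b))
          have hIy : idealOf (v - x1) = pIdeal a ∪ pIdeal θ := by
            ext z
            rw [mem_idealOf, Finset.mem_union]
            constructor
            · rintro ⟨j, hj, hzj⟩
              rcases Finset.mem_union.1 (hsuppy hj) with hj' | hj'
              · exact Or.inl (mem_pIdeal.2 (hzj.trans (mem_pIdeal.1 hj')))
              · exact Or.inr (mem_pIdeal.2 (hzj.trans (mem_pIdeal.1 hj')))
            · rintro (hz | hz)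
              · exact ⟨a, mem_suppB.2 hya0, mem_pIdeal.1 hz⟩
              · exact ⟨θ, mem_suppB.2 hyθ, mem_pIdeal.1 hz⟩
          have hMy : maxOf (v - x1) = {a, θ} := by
            ext b
            rw [mem_maxOf, hIy]
            constructor
            · rintro ⟨hb1, hb2⟩
              rcases Finset.mem_union.1 hb1 with hb | hb
              · have hba : b = a :=
                  hb2 a (Finset.mem_union_left _ (mem_pIdeal.2 le_rfl)) (mem_pIdeal.1 hb)
                simp [hba]
              · have hbθ : b = θ :=
                  hb2 θ (Finset.mem_union_right _ (mem_pIdeal.2 le_rfl)) (mem_pIdeal.1 hb)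
                simp [hbθ]
            · intro hb
              rcases Finset.mem_insert.1 hb with rfl | hb
              · refine ⟨Finset.mem_union_left _ (mem_pIdeal.2 le_rfl), ?_⟩
                intro z hz hbz
                rcases Finset.mem_union.1 hz with hz' | hz'
                · exact le_antisymm hbz (mem_pIdeal.1 hz')
                · exact absurd (hbz.trans (mem_pIdeal.1 hz')) hnia
              · rw [Finset.mem_singleton] at hb
                subst hb
                refine ⟨Finset.mem_union_right _ (mem_pIdeal.2 le_rfl), ?_⟩
                intro z hz hbz
                rcases Finset.mem_union.1 hz with hz' | hz'
                · exact absurd (hbz.trans (mem_pIdeal.1 hz')) hθi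
                · exact le_antisymm hbz (mem_pIdeal.1 hz')
          have hcardy : ((pIdeal a).erase a).card
              ≤ (idealOf (v - x1) \ maxOf (v - x1)).card := by
            apply Finset.card_le_card
            intro z hz
            rw [Finset.mem_erase, mem_pIdeal] at hz
            rw [Finset.mem_sdiff, hIy, hMy]
            refine ⟨Finset.mem_union_left _ (mem_pIdeal.2 hz.2), ?_⟩
            intro hmem
            rcases Finset.mem_insert.1 hmem with rfl | hmem
            · exact hz.1 rfl
            · rw [Finset.mem_singleton] at hmem
              subst hmem
              exact hθi hz.2
          have hsumy : Wblk w (v - x1) a + Wblk w (v - x1) θ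
              = ∑ b ∈ maxOf (v - x1), Wblk w (v - x1) b := by
            rw [hMy, Finset.sum_pair (Ne.symm hθne_a)]
          have hWya : Wblk w (v - x1) a = Wblk w v a := by
            unfold Wblk
            rw [hya]
          have hWyθ : mw w ≤ Wblk w (v - x1) θ := mw_le_Wblk hyθ
          have hωv : omegaW w v = Wblk w v a + ((pIdeal a).erase a).card * Mw w :=
            omegaW_principal w hIv
          have e1 : omegaW w (v - x1)
              = (∑ b ∈ maxOf (v - x1), Wblk w (v - x1) b)
                + (idealOf (v - x1) \ maxOf (v - x1)).card * Mw w := rfl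
          have hmul : ((pIdeal a).erase a).card * Mw w
              ≤ (idealOf (v - x1) \ maxOf (v - x1)).card * Mw w :=
            Nat.mul_le_mul_right _ hcardy
          have h1 := hT (v - x1)
          rw [hr2] at h1
          omega

end Lemmas

/-- For a linear isometry `T` and nonzero `v_i ∈ V_i`, the ideal generated by
`supp_π(T v_i)` is a principal ideal. -/
theorem stmt7 [Fintype ι] [PartialOrder ι] [Field F] [Fintype F] {k : ι → ℕ}
    (w : F → ℕ)
    (hw0 : ∀ a : F, w a = 0 ↔ a = 0)
    (hwneg : ∀ a : F, w (-a) = w a)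
    (hwadd : ∀ a b : F, w (a + b) ≤ w a + w b)
    (T : (∀ i, Fin (k i) → F) →ₗ[F] (∀ i, Fin (k i) → F))
    (hT : ∀ u : ∀ i, Fin (k i) → F, omegaW w (T u) = omegaW w u) :
    ∀ (i : ι) (v : ∀ i, Fin (k i) → F), suppB v ⊆ {i} → v ≠ 0 →
      ∃ j : ι, idealOf (T v) = pIdeal j := by
  intro i v hv h0
  exact aux w hw0 (pIdeal i).card T hT i le_rfl v hv h0
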